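/- Let φ be a norm on ℝ² and let Ω ⊆ ℝ² be a bounded convex open set. Define v(r) = |Ω^r| for r ≥ 0. Then v(r) = |Ω| for all r ≤ r_Ω, v(r) = 0 for all r > R_Ω, and v is continuous and monotone decreasing on [r_Ω, R_Ω]; consequently, for every m ∈ [|Ω^{R_Ω}|, |Ω|] there exists a unique value r_m ∈ [r_Ω, R_Ω] such that v(r_m) = m. -/

import Mathlib

open MeasureTheory Set ENNReal Filter

noncomputable section

/-- `φ` is a norm on `ℝⁿ` (represented as `Fin n → ℝ`). -/
structure IsNorm {n : ℕ} (φ : (Fin n → ℝ) → ℝ) : Prop where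
  nonneg : ∀ x, 0 ≤ φ x
  eq_zero_iff : ∀ x, φ x = 0 ↔ x = 0
  smul_eq : ∀ (a : ℝ) (x : Fin n → ℝ), φ (a • x) = |a| * φ x
  add_le : ∀ x y, φ (x + y) ≤ φ x + φ y

/-- The divergence of a vector field `η : ℝⁿ → ℝⁿ`. -/
def diverg {n : ℕ} (η : (Fin n → ℝ) → (Fin n → ℝ)) (x : Fin n → ℝ) : ℝ :=
  ∑ i, fderiv ℝ η x (Pi.single i 1) i

/-- The anisotropic total variation `∫ φ*(Du)` of `u : ℝⁿ → ℝ`: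
`sup { ∫ u div η dx : η ∈ C¹_c(ℝⁿ;ℝⁿ), φ(η(x)) ≤ 1 ∀ x }`, as an extended real. -/
def anisoTV {n : ℕ} (φ : (Fin n → ℝ) → ℝ) (u : (Fin n → ℝ) → ℝ) : ℝ≥0∞ :=
  ⨆ η ∈ {η : (Fin n → ℝ) → (Fin n → ℝ) |
      ContDiff ℝ 1 η ∧ HasCompactSupport η ∧ ∀ x, φ (η x) ≤ 1},
    ENNReal.ofReal (∫ x, u x * diverg η x)

/-- `u ∈ BV(ℝⁿ)` (with respect to the anisotropic total variation). -/
def IsBV {n : ℕ} (φ : (Fin n → ℝ) → ℝ) (u : (Fin n → ℝ) → ℝ) : Prop :=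
  Integrable u volume ∧ anisoTV φ u ≠ ⊤

/-- `u` is admissible for problem (1): `u ∈ BV(ℝⁿ)`, `u = 0` a.e. outside `Ω`,
`u` is a.e. `ℕ`-valued, and `∫_Ω u = m`. -/
def Admissible {n : ℕ} (φ : (Fin n → ℝ) → ℝ) (Ω : Set (Fin n → ℝ)) (m : ℝ)
    (u : (Fin n → ℝ) → ℝ) : Prop :=
  IsBV φ u ∧ (∀ᵐ x ∂volume, x ∉ Ω → u x = 0) ∧
    (∀ᵐ x ∂volume, ∃ k : ℕ, u x = k) ∧ (∫ x in Ω, u x) = m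

/-- `u` is a minimizer of problem (1). -/
def IsMinimizer {n : ℕ} (φ : (Fin n → ℝ) → ℝ) (Ω : Set (Fin n → ℝ)) (m : ℝ)
    (u : (Fin n → ℝ) → ℝ) : Prop :=
  Admissible φ Ω m u ∧ ∀ v, Admissible φ Ω m v → anisoTV φ u ≤ anisoTV φ v

/-- The anisotropic perimeter `P_φ(E)` of a set `E ⊆ ℝⁿ`. -/
def anisoPerimeter {n : ℕ} (φ : (Fin n → ℝ) → ℝ) (E : Set (Fin n → ℝ)) : ℝ≥0∞ :=
  anisoTV φ (E.indicator (1 : (Fin n → ℝ) → ℝ))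

/-- The Wulff ball `W_r(x) = {y : φ(y-x) < r}`. -/
def wulffBall {n : ℕ} (φ : (Fin n → ℝ) → ℝ) (x : Fin n → ℝ) (r : ℝ) : Set (Fin n → ℝ) :=
  {y | φ (y - x) < r}

/-- `E` satisfies the `rW_φ`-condition. -/
def rWCond {n : ℕ} (φ : (Fin n → ℝ) → ℝ) (E : Set (Fin n → ℝ)) (r : ℝ) : Prop :=
  ∀ x ∈ frontier E, ∃ y, wulffBall φ y r ⊆ E ∧ x ∈ frontier (wulffBall φ y r)

/-- The Wulff plaquette `E^r`, the union of all Wulff balls of radius `r` contained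
in `E` (with `E^0 = E`). -/
def plaquette {n : ℕ} (φ : (Fin n → ℝ) → ℝ) (E : Set (Fin n → ℝ)) (r : ℝ) :
    Set (Fin n → ℝ) :=
  if r = 0 then E else ⋃ (x) (_ : wulffBall φ x r ⊆ E), wulffBall φ x r

/-- `R_Ω`: the maximal `R > 0` such that some Wulff ball of radius `R` is contained in `Ω`. -/
def maxInradius {n : ℕ} (φ : (Fin n → ℝ) → ℝ) (Ω : Set (Fin n → ℝ)) : ℝ :=
  sSup {R | 0 < R ∧ ∃ x, wulffBall φ x R ⊆ Ω}

/-- `r_Ω`: the maximal `r > 0` such that `Ω` satisfies the `rW_φ`-condition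
(`0` if there is none, since `sSup ∅ = 0`). -/
def maxRollRadius {n : ℕ} (φ : (Fin n → ℝ) → ℝ) (Ω : Set (Fin n → ℝ)) : ℝ :=
  sSup {r | 0 < r ∧ rWCond φ Ω r}

/-- The set of points of Lebesgue density `1` of `E`. -/
def densityPoints {n : ℕ} (E : Set (Fin n → ℝ)) : Set (Fin n → ℝ) :=
  {x | Tendsto (fun r : ℝ => volume (E ∩ Metric.ball x r) / volume (Metric.ball x r))
    (nhdsWithin 0 (Ioi 0)) (nhds 1)}

/-- `E` is a minimizer of problem (10): the constrained isoperimetric problem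
minimizing `P_φ` among measurable subsets of `Ω` of prescribed measure `m`. -/
def IsIsopMinimizer {n : ℕ} (φ : (Fin n → ℝ) → ℝ) (Ω : Set (Fin n → ℝ)) (m : ℝ)
    (E : Set (Fin n → ℝ)) : Prop :=
  MeasurableSet E ∧ E ⊆ Ω ∧ (volume E).toReal = m ∧
    ∀ F, MeasurableSet F → F ⊆ Ω → (volume F).toReal = m →
      anisoPerimeter φ E ≤ anisoPerimeter φ F

/-- The Euclidean norm on `ℝ²`. -/
def euclNorm (v : Fin 2 → ℝ) : ℝ := Real.sqrt (v 0 ^ 2 + v 1 ^ 2)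

/-- The crystalline norm `φ(ν) = |ν₁| + |ν₂|` on `ℝ²`. -/
def crysNorm (v : Fin 2 → ℝ) : ℝ := |v 0| + |v 1|

/-- The open unit square `(0,1)² ⊆ ℝ²`. -/
def unitSquare : Set (Fin 2 → ℝ) := univ.pi fun _ => Ioo (0 : ℝ) 1

/-- The closed unit square `[0,1]² ⊆ ℝ²`. -/
def closedUnitSquare : Set (Fin 2 → ℝ) := univ.pi fun _ => Icc (0 : ℝ) 1

/-- `j` is the essential supremum `‖u‖_∞` of `u`. -/
def IsEssSup (u : (Fin 2 → ℝ) → ℝ) (j : ℕ) : Prop :=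
  (∀ᵐ x ∂volume, u x ≤ (j : ℝ)) ∧ ∀ c : ℝ, (∀ᵐ x ∂volume, u x ≤ c) → (j : ℝ) ≤ c

/-! ### Auxiliary lemmas -/

section AuxNorm

variable {φ : (Fin 2 → ℝ) → ℝ}

lemma IsNorm.zero' (hφ : IsNorm φ) : φ 0 = 0 := (hφ.eq_zero_iff 0).2 rfl

lemma IsNorm.neg' (hφ : IsNorm φ) (x : Fin 2 → ℝ) : φ (-x) = φ x := by
  have := hφ.smul_eq (-1) x
  simpa using this

lemma IsNorm.smul_nn (hφ : IsNorm φ) {a : ℝ} (ha : 0 ≤ a) (x : Fin 2 → ℝ) :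
    φ (a • x) = a * φ x := by
  rw [hφ.smul_eq, abs_of_nonneg ha]

lemma IsNorm.exists_upper (hφ : IsNorm φ) : ∃ C : ℝ, 0 < C ∧ ∀ x, φ x ≤ C * ‖x‖ := by
  refine ⟨φ ((Pi.single 0 1 : Fin 2 → ℝ)) + φ ((Pi.single 1 1 : Fin 2 → ℝ)) + 1,
    by have := hφ.nonneg ((Pi.single 0 1 : Fin 2 → ℝ)); have := hφ.nonneg ((Pi.single 1 1 : Fin 2 → ℝ)); linarith,
    fun x => ?_⟩
  have hx : x = x 0 • (Pi.single 0 1 : Fin 2 → ℝ) + x 1 • (Pi.single 1 1 : Fin 2 → ℝ) := by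
    funext i
    fin_cases i <;> simp
  have h1 : φ x ≤ φ (x 0 • (Pi.single 0 1 : Fin 2 → ℝ)) + φ (x 1 • (Pi.single 1 1 : Fin 2 → ℝ)) := by
    conv_lhs => rw [hx]
    exact hφ.add_le _ _
  rw [hφ.smul_eq, hφ.smul_eq] at h1
  have h2 : |x 0| ≤ ‖x‖ := by
    have := norm_le_pi_norm x 0
    simpa [Real.norm_eq_abs] using this
  have h3 : |x 1| ≤ ‖x‖ := by
    have := norm_le_pi_norm x 1
    simpa [Real.norm_eq_abs] using this
  have h4 : 0 ≤ φ ((Pi.single 0 1 : Fin 2 → ℝ)) := hφ.nonneg _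
  have h5 : 0 ≤ φ ((Pi.single 1 1 : Fin 2 → ℝ)) := hφ.nonneg _
  nlinarith [abs_nonneg (x 0), abs_nonneg (x 1), norm_nonneg x]

lemma IsNorm.continuous' (hφ : IsNorm φ) : Continuous φ := by
  obtain ⟨C, hC, hub⟩ := hφ.exists_upper
  rw [Metric.continuous_iff]
  intro b ε hε
  refine ⟨ε / C, by positivity, fun a hab => ?_⟩
  have h1 : φ a ≤ φ (a - b) + φ b := by
    have := hφ.add_le (a - b) b
    simpa using this
  have h2 : φ b ≤ φ (b - a) + φ a := by
    have := hφ.add_le (b - a) a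
    simpa using this
  have hba : φ (b - a) = φ (a - b) := by
    rw [← neg_sub a b, hφ.neg']
  have hsub : φ (a - b) ≤ C * ‖a - b‖ := hub _
  have hd : ‖a - b‖ = dist a b := (dist_eq_norm a b).symm
  have : dist (φ a) (φ b) ≤ φ (a - b) := by
    rw [Real.dist_eq, abs_le]
    constructor <;> [linarith [hφ.nonneg (a-b)]; skip]
    linarith [hφ.nonneg (a-b)]
  have hfin : C * dist a b < C * (ε / C) := by
    exact mul_lt_mul_of_pos_left hab hC
  rw [mul_div_cancel₀ _ (ne_of_gt hC)] at hfin
  calc dist (φ a) (φ b) ≤ φ (a - b) := this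
    _ ≤ C * ‖a - b‖ := hsub
    _ = C * dist a b := by rw [hd]
    _ < ε := hfin

lemma IsNorm.exists_lower (hφ : IsNorm φ) : ∃ c : ℝ, 0 < c ∧ ∀ x, c * ‖x‖ ≤ φ x := by
  have hsph : (Metric.sphere (0 : Fin 2 → ℝ) 1).Nonempty :=
    NormedSpace.sphere_nonempty.2 zero_le_one
  obtain ⟨u, hu, hmin⟩ := (isCompact_sphere (0 : Fin 2 → ℝ) 1).exists_isMinOn hsph
    hφ.continuous'.continuousOn
  have hu1 : ‖u‖ = 1 := by simpa using hu
  have hune : u ≠ 0 := by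
    intro h
    rw [h] at hu1
    simp at hu1
  have hupos : 0 < φ u := by
    rcases lt_or_eq_of_le (hφ.nonneg u) with h | h
    · exact h
    · exact absurd ((hφ.eq_zero_iff u).1 h.symm) hune
  refine ⟨φ u, hupos, fun x => ?_⟩
  rcases eq_or_ne x 0 with rfl | hx
  · simp [hφ.zero']
  · have hnx : 0 < ‖x‖ := norm_pos_iff.2 hx
    have hmem : ‖x‖⁻¹ • x ∈ Metric.sphere (0 : Fin 2 → ℝ) 1 := by
      simp [norm_smul, abs_of_nonneg (inv_nonneg.2 hnx.le), inv_mul_cancel₀ (ne_of_gt hnx)]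
    have h1 : φ u ≤ φ (‖x‖⁻¹ • x) := hmin hmem
    rw [hφ.smul_nn (inv_nonneg.2 hnx.le)] at h1
    calc φ u * ‖x‖ ≤ (‖x‖⁻¹ * φ x) * ‖x‖ := by
          exact mul_le_mul_of_nonneg_right h1 hnx.le
      _ = φ x := by field_simp
end AuxNorm
section AuxBall

variable {φ : (Fin 2 → ℝ) → ℝ}

lemma mem_wulffBall' {x y : Fin 2 → ℝ} {r : ℝ} : y ∈ wulffBall φ x r ↔ φ (y - x) < r :=
  Iff.rfl

lemma isOpen_wulffBall (hφ : IsNorm φ) (x : Fin 2 → ℝ) (r : ℝ) :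
    IsOpen (wulffBall φ x r) := by
  have : wulffBall φ x r = (fun y => φ (y - x)) ⁻¹' (Iio r) := rfl
  rw [this]
  exact (hφ.continuous'.comp (continuous_id.sub continuous_const)).isOpen_preimage _ isOpen_Iio

lemma self_mem_wulffBall (hφ : IsNorm φ) {x : Fin 2 → ℝ} {r : ℝ} (hr : 0 < r) :
    x ∈ wulffBall φ x r := by
  simp [mem_wulffBall', hφ.zero', hr]

lemma wulffBall_mono (hφ : IsNorm φ) {x : Fin 2 → ℝ} {r r' : ℝ} (h : r ≤ r') :
    wulffBall φ x r ⊆ wulffBall φ x r' := fun y hy => lt_of_lt_of_le hy h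

lemma closure_wulffBall_subset (hφ : IsNorm φ) {x : Fin 2 → ℝ} {r : ℝ} :
    closure (wulffBall φ x r) ⊆ {y | φ (y - x) ≤ r} := by
  have hcl : IsClosed {y : Fin 2 → ℝ | φ (y - x) ≤ r} :=
    isClosed_le (hφ.continuous'.comp (continuous_id.sub continuous_const)) continuous_const
  exact closure_minimal (fun y hy => (le_of_lt hy : φ (y - x) ≤ r)) hcl

lemma mem_closure_wulffBall (hφ : IsNorm φ) {x z : Fin 2 → ℝ} {r : ℝ} (hr : 0 < r)
    (hz : φ (z - x) ≤ r) : z ∈ closure (wulffBall φ x r) := by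
  rcases lt_or_eq_of_le hz with h | h
  · exact subset_closure h
  rw [Metric.mem_closure_iff]
  intro ε hε
  set l : ℝ := max 0 (1 - ε / (‖z - x‖ + 1)) with hl
  have hnx : 0 ≤ ‖z - x‖ := norm_nonneg _
  have hεd : 0 < ε / (‖z - x‖ + 1) := by positivity
  have hl0 : 0 ≤ l := le_max_left _ _
  have hl1 : l < 1 := by
    rw [hl]
    apply max_lt one_pos
    linarith
  refine ⟨x + l • (z - x), ?_, ?_⟩
  · show φ (x + l • (z - x) - x) < r
    have : x + l • (z - x) - x = l • (z - x) := by abel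
    rw [this, hφ.smul_nn hl0, h]
    have hrpos : 0 < r := hr
    calc l * r < 1 * r := by exact mul_lt_mul_of_pos_right hl1 hrpos
      _ = r := one_mul r
  · have hz_eq : z - (x + l • (z - x)) = (1 - l) • (z - x) := by
      rw [sub_smul, one_smul]
      abel
    rw [dist_eq_norm, hz_eq, norm_smul, Real.norm_eq_abs, abs_of_nonneg (by linarith)]
    have h1l : 1 - l ≤ ε / (‖z - x‖ + 1) := by
      rw [hl]
      have := le_max_right 0 (1 - ε / (‖z - x‖ + 1))
      linarith
    calc (1 - l) * ‖z - x‖ ≤ ε / (‖z - x‖ + 1) * ‖z - x‖ := by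
          exact mul_le_mul_of_nonneg_right h1l hnx
      _ < ε := by
          rw [div_mul_eq_mul_div, div_lt_iff₀ (by linarith)]
          nlinarith

lemma phi_eq_of_mem_frontier (hφ : IsNorm φ) {x y : Fin 2 → ℝ} {r : ℝ}
    (h : x ∈ frontier (wulffBall φ y r)) : φ (x - y) = r := by
  rw [(isOpen_wulffBall hφ y r).frontier_eq] at h
  obtain ⟨hc, hn⟩ := h
  have h1 : φ (x - y) ≤ r := closure_wulffBall_subset hφ hc
  have h2 : ¬ φ (x - y) < r := hn
  linarith [lt_or_eq_of_le h1, not_lt.1 h2]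

lemma mem_frontier_wulffBall (hφ : IsNorm φ) {x y : Fin 2 → ℝ} {r : ℝ} (hr : 0 < r)
    (h : φ (x - y) = r) : x ∈ frontier (wulffBall φ y r) := by
  rw [(isOpen_wulffBall hφ y r).frontier_eq]
  exact ⟨mem_closure_wulffBall hφ hr h.le, by simp [mem_wulffBall', h]⟩

/-- Inside a large ball, every point lies in a small ball contained in the large one. -/
lemma ball_in_ball (hφ : IsNorm φ) {y z : Fin 2 → ℝ} {s t : ℝ} (hs : 0 < s) (hst : s ≤ t)
    (hz : φ (z - y) < t) : ∃ y', φ (z - y') < s ∧ φ (y' - y) ≤ t - s := by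
  set Φ := φ (z - y) with hΦ
  have hΦ0 : 0 ≤ Φ := hφ.nonneg _
  set m : ℝ := min 1 ((t - s) / Φ) with hm
  have hm0 : 0 ≤ m := by
    apply le_min zero_le_one
    apply div_nonneg (by linarith) hΦ0
  refine ⟨y + m • (z - y), ?_, ?_⟩
  · have he : z - (y + m • (z - y)) = (1 - m) • (z - y) := by
      rw [sub_smul, one_smul]; abel
    have hm1 : m ≤ 1 := min_le_left _ _
    rw [he, hφ.smul_nn (by linarith)]
    rcases eq_or_lt_of_le hΦ0 with h0 | h0
    · rw [← hΦ, ← h0, mul_zero]; exact hs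
    · rcases le_or_gt 1 ((t - s) / Φ) with hc | hc
      · have : m = 1 := min_eq_left hc
        rw [this]; simpa using hs
      · have hmeq : m = (t - s) / Φ := min_eq_right hc.le
        rw [hmeq, ← hΦ]
        rw [div_lt_iff₀ h0] at hc
        have : (1 - (t - s) / Φ) * Φ = Φ - (t - s) := by
          field_simp
        rw [this]
        linarith
  · have he : y + m • (z - y) - y = m • (z - y) := by abel
    rw [he, hφ.smul_nn hm0]
    rcases eq_or_lt_of_le hΦ0 with h0 | h0
    · rw [← hΦ, ← h0, mul_zero]; linarith
    · have : m ≤ (t - s) / Φ := min_le_right _ _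
      calc m * Φ ≤ (t - s) / Φ * Φ := mul_le_mul_of_nonneg_right this hΦ0
        _ = t - s := by field_simp

/-- Convex combination of two Wulff balls inside a convex set. -/
lemma combo_ball_subset (hφ : IsNorm φ) {Ω : Set (Fin 2 → ℝ)} (hconv : Convex ℝ Ω)
    {y x : Fin 2 → ℝ} {a b : ℝ} (ha : 0 < a) (hb : 0 < b)
    (hY : wulffBall φ y a ⊆ Ω) (hX : wulffBall φ x b ⊆ Ω) {l : ℝ} (hl0 : 0 ≤ l) (hl1 : l ≤ 1) :
    wulffBall φ ((1 - l) • y + l • x) ((1 - l) * a + l * b) ⊆ Ω := by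
  intro w hw
  set ρ : ℝ := (1 - l) * a + l * b with hρdef
  have hρ : 0 < ρ := by
    rcases eq_or_lt_of_le hl1 with h | h
    · rw [hρdef, h]; simpa using hb
    · have h1 : 0 < (1 - l) * a := by nlinarith
      nlinarith [mul_nonneg hl0 hb.le]
  set d : Fin 2 → ℝ := w - ((1 - l) • y + l • x) with hd
  have hφd : φ d < ρ := hw
  have key : (1 - l) * (a / ρ) + l * (b / ρ) = 1 := by
    field_simp
    exact hρdef.symm
  have hsum : (1 - l) • ((a / ρ) • d) + l • ((b / ρ) • d) = d := by
    rw [smul_smul, smul_smul, ← add_smul, key, one_smul]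
  have hw' : w = (1 - l) • (y + (a / ρ) • d) + l • (x + (b / ρ) • d) := by
    rw [smul_add, smul_add]
    rw [show (1-l) • y + (1-l) • ((a/ρ) • d) + (l • x + l • ((b/ρ) • d))
        = ((1-l) • y + l • x) + ((1-l) • ((a/ρ) • d) + l • ((b/ρ) • d)) by abel, hsum, hd]
    abel
  have hm1 : y + (a / ρ) • d ∈ Ω := by
    apply hY
    show φ (y + (a / ρ) • d - y) < a
    have : y + (a / ρ) • d - y = (a / ρ) • d := by abel
    rw [this, hφ.smul_nn (by positivity)]
    rw [div_mul_eq_mul_div, mul_comm, ← div_mul_eq_mul_div]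
    calc φ d / ρ * a < 1 * a := by
          apply mul_lt_mul_of_pos_right _ ha
          rw [div_lt_one hρ]; exact hφd
      _ = a := one_mul a
  have hm2 : x + (b / ρ) • d ∈ Ω := by
    apply hX
    show φ (x + (b / ρ) • d - x) < b
    have : x + (b / ρ) • d - x = (b / ρ) • d := by abel
    rw [this, hφ.smul_nn (by positivity)]
    rw [div_mul_eq_mul_div, mul_comm, ← div_mul_eq_mul_div]
    calc φ d / ρ * b < 1 * b := by
          apply mul_lt_mul_of_pos_right _ hb
          rw [div_lt_one hρ]; exact hφd
      _ = b := one_mul b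
  rw [hw']
  exact hconv hm1 hm2 (by linarith) hl0 (by ring)

/-- Convex combination of a Wulff ball and a point inside a convex set. -/
lemma combo_ball_point_subset (hφ : IsNorm φ) {Ω : Set (Fin 2 → ℝ)} (hconv : Convex ℝ Ω)
    {x₀ z : Fin 2 → ℝ} {R l : ℝ} (hR : 0 < R) (hball : wulffBall φ x₀ R ⊆ Ω)
    (hz : z ∈ Ω) (hl0 : 0 ≤ l) (hl1 : l < 1) :
    wulffBall φ ((1 - l) • x₀ + l • z) ((1 - l) * R) ⊆ Ω := by
  intro w hw
  set d : Fin 2 → ℝ := w - ((1 - l) • x₀ + l • z) with hd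
  have hφd : φ d < (1 - l) * R := hw
  have h1l : 0 < 1 - l := by linarith
  have hw' : w = (1 - l) • (x₀ + (1 / (1 - l)) • d) + l • z := by
    rw [smul_add, smul_smul]
    have : (1 - l) * (1 / (1 - l)) = 1 := by field_simp
    rw [this, one_smul]
    rw [hd]; abel
  have hm1 : x₀ + (1 / (1 - l)) • d ∈ Ω := by
    apply hball
    show φ (x₀ + (1 / (1 - l)) • d - x₀) < R
    have : x₀ + (1 / (1 - l)) • d - x₀ = (1 / (1 - l)) • d := by abel
    rw [this, hφ.smul_nn (by positivity)]
    rw [div_mul_eq_mul_div, one_mul, div_lt_iff₀ h1l]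
    linarith [hφd]
  rw [hw']
  exact hconv hm1 hz h1l.le hl0 (by ring)

end AuxBall
section AuxPlaquette

variable {φ : (Fin 2 → ℝ) → ℝ} {Ω : Set (Fin 2 → ℝ)}

lemma plaquette_subset (φ : (Fin 2 → ℝ) → ℝ) (Ω : Set (Fin 2 → ℝ)) (r : ℝ) :
    plaquette φ Ω r ⊆ Ω := by
  unfold plaquette
  split
  · exact subset_rfl
  · exact iUnion₂_subset fun x hx => hx

lemma wulffBall_subset_plaquette {y : Fin 2 → ℝ} {r : ℝ} (hr : r ≠ 0)
    (h : wulffBall φ y r ⊆ Ω) : wulffBall φ y r ⊆ plaquette φ Ω r := by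
  unfold plaquette
  rw [if_neg hr]
  exact subset_iUnion₂ (s := fun x (_ : wulffBall φ x r ⊆ Ω) => wulffBall φ x r) y h

lemma mem_plaquette {r : ℝ} (hr : r ≠ 0) {z : Fin 2 → ℝ} :
    z ∈ plaquette φ Ω r ↔ ∃ y, wulffBall φ y r ⊆ Ω ∧ z ∈ wulffBall φ y r := by
  unfold plaquette
  rw [if_neg hr]
  simp only [mem_iUnion]
  tauto

lemma isOpen_plaquette (hφ : IsNorm φ) (hΩ : IsOpen Ω) (r : ℝ) :
    IsOpen (plaquette φ Ω r) := by
  unfold plaquette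
  split
  · exact hΩ
  · exact isOpen_iUnion fun x => isOpen_iUnion fun _ => isOpen_wulffBall hφ x r

lemma plaquette_antitone (hφ : IsNorm φ) {s t : ℝ} (hs : 0 ≤ s) (hst : s ≤ t) :
    plaquette φ Ω t ⊆ plaquette φ Ω s := by
  rcases eq_or_lt_of_le hs with rfl | hs
  · have : plaquette φ Ω 0 = Ω := by unfold plaquette; rw [if_pos rfl]
    rw [this]
    exact plaquette_subset φ Ω t
  · rcases eq_or_lt_of_le hst with rfl | hst'
    · exact subset_rfl
    intro z hz
    rw [mem_plaquette (ne_of_gt (lt_trans hs hst'))] at hz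
    obtain ⟨y, hy, hzy⟩ := hz
    obtain ⟨y', h1, h2⟩ := ball_in_ball hφ hs hst hzy
    rw [mem_plaquette (ne_of_gt hs)]
    refine ⟨y', fun w hw => hy ?_, h1⟩
    show φ (w - y) < t
    calc φ (w - y) = φ ((w - y') + (y' - y)) := by rw [sub_add_sub_cancel]
      _ ≤ φ (w - y') + φ (y' - y) := hφ.add_le _ _
      _ < s + (t - s) := add_lt_add_of_lt_of_le hw h2
      _ = t := by ring

lemma convex_plaquette (hφ : IsNorm φ) (hconv : Convex ℝ Ω) (r : ℝ) :
    Convex ℝ (plaquette φ Ω r) := by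
  unfold plaquette
  split
  · exact hconv
  · rename_i hr
    intro z1 h1 z2 h2 a b ha hb hab
    simp only [mem_iUnion] at h1 h2 ⊢
    obtain ⟨y1, hy1, hz1⟩ := h1
    obtain ⟨y2, hy2, hz2⟩ := h2
    have hr0 : 0 < r := by
      rcases lt_trichotomy r 0 with h | h | h
      · exact absurd hz1 (by intro hc; exact absurd (lt_trans hc h) (not_lt.2 (hφ.nonneg _)))
      · exact absurd h hr
      · exact h
    refine ⟨a • y1 + b • y2, ?_, ?_⟩
    · -- ball at combo center ⊆ Ω
      have := combo_ball_subset hφ hconv hr0 hr0 hy1 hy2 (l := b) hb (by linarith)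
      have hab' : (1 : ℝ) - b = a := by linarith
      rw [hab'] at this
      have hrr : (a * r + b * r) = r := by nlinarith
      rw [hrr] at this
      exact this
    · show φ (a • z1 + b • z2 - (a • y1 + b • y2)) < r
      have he : a • z1 + b • z2 - (a • y1 + b • y2) = a • (z1 - y1) + b • (z2 - y2) := by
        rw [smul_sub, smul_sub]; abel
      rw [he]
      have hle : φ (a • (z1 - y1) + b • (z2 - y2)) ≤ a * φ (z1 - y1) + b * φ (z2 - y2) := by
        calc φ (a • (z1 - y1) + b • (z2 - y2)) ≤ φ (a • (z1 - y1)) + φ (b • (z2 - y2)) :=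
              hφ.add_le _ _
          _ = a * φ (z1 - y1) + b * φ (z2 - y2) := by rw [hφ.smul_nn ha, hφ.smul_nn hb]
      rcases eq_or_lt_of_le ha with ha0 | ha0
      · have hb1 : b = 1 := by linarith
        have : a * φ (z1 - y1) + b * φ (z2 - y2) = φ (z2 - y2) := by
          rw [← ha0, hb1]; ring
        rw [this] at hle
        exact lt_of_le_of_lt hle hz2
      · have : a * φ (z1 - y1) + b * φ (z2 - y2) < a * r + b * r := by
          have h1' : a * φ (z1 - y1) < a * r := mul_lt_mul_of_pos_left hz1 ha0
          have h2' : b * φ (z2 - y2) ≤ b * r := mul_le_mul_of_nonneg_left hz2.le hb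
          linarith
        have hr' : a * r + b * r = r := by nlinarith
        linarith

lemma plaquette_zero (φ : (Fin 2 → ℝ) → ℝ) (Ω : Set (Fin 2 → ℝ)) :
    plaquette φ Ω 0 = Ω := by unfold plaquette; rw [if_pos rfl]

/-- The set of admissible centers is closed. -/
lemma isClosed_centers (hφ : IsNorm φ) (Ω : Set (Fin 2 → ℝ)) (s : ℝ) :
    IsClosed {y | wulffBall φ y s ⊆ Ω} := by
  have he : {y | wulffBall φ y s ⊆ Ω} = ⋂ z ∈ Ωᶜ, {y | s ≤ φ (z - y)} := by
    ext y
    simp only [mem_setOf_eq, mem_iInter, mem_compl_iff]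
    constructor
    · intro h z hz
      by_contra hlt
      exact hz (h (by simpa [mem_wulffBall'] using not_le.1 hlt))
    · intro h w hw
      by_contra hwn
      exact absurd hw (not_lt.2 (h w hwn))
  rw [he]
  exact isClosed_biInter fun z _ =>
    isClosed_le continuous_const (hφ.continuous'.comp (continuous_const.sub continuous_id))

lemma centers_subset (hφ : IsNorm φ) {s : ℝ} (hs : 0 < s) :
    {y | wulffBall φ y s ⊆ Ω} ⊆ Ω := fun y hy => hy (self_mem_wulffBall hφ hs)

end AuxPlaquette
section AuxMeasure

variable {A B Ω : Set (Fin 2 → ℝ)} {φ : (Fin 2 → ℝ) → ℝ}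

lemma vol_closure_convex (hconv : Convex ℝ A) : volume (closure A) = volume A := by
  have hsub2 : closure A ⊆ A ∪ frontier A := by
    intro x hx
    by_cases h : x ∈ A
    · exact Or.inl h
    · exact Or.inr ⟨hx, fun hi => h (interior_subset hi)⟩
  apply le_antisymm
  · calc volume (closure A) ≤ volume (A ∪ frontier A) := measure_mono hsub2
      _ ≤ volume A + volume (frontier A) := measure_union_le _ _
      _ = volume A := by rw [hconv.addHaar_frontier volume, add_zero]
  · exact measure_mono subset_closure

/-- An open set inside the closure of an open convex nonempty set is inside the set. -/
lemma open_subset_of_subset_closure (hA : IsOpen A) (hAconv : Convex ℝ A)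
    (hAne : A.Nonempty) (hB : IsOpen B) (h : B ⊆ closure A) : B ⊆ A := by
  obtain ⟨a₀, ha₀⟩ := hAne
  intro x hx
  -- find a point y ∈ B beyond x on the ray from a₀
  have hcont : Continuous fun t : ℝ => x + t • (x - a₀) := by
    apply continuous_const.add
    exact (continuous_id.smul continuous_const)
  have h0 : (fun t : ℝ => x + t • (x - a₀)) 0 ∈ B := by simpa using hx
  have hnb : (fun t : ℝ => x + t • (x - a₀)) ⁻¹' B ∈ nhds (0 : ℝ) :=
    hcont.continuousAt.preimage_mem_nhds (hB.mem_nhds h0)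
  obtain ⟨ε, hε, hball⟩ := Metric.mem_nhds_iff.1 hnb
  set t : ℝ := ε / 2 with ht
  have htpos : 0 < t := by positivity
  have hy : x + t • (x - a₀) ∈ B := by
    apply hball
    have hdt : dist t (0:ℝ) = t := by rw [Real.dist_eq, sub_zero, abs_of_nonneg htpos.le]
    simp only [Metric.mem_ball]
    rw [hdt, ht]
    linarith
  set y : Fin 2 → ℝ := x + t • (x - a₀) with hydef
  have hxcombo : x = (t / (1 + t)) • a₀ + (1 / (1 + t)) • y := by
    rw [hydef, smul_add, smul_smul]
    have h1t : (0:ℝ) < 1 + t := by linarith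
    rw [show (1 / (1 + t)) • x + (1 / (1 + t) * t) • (x - a₀)
        = (1 / (1 + t) + 1 / (1 + t) * t) • x - (1 / (1 + t) * t) • a₀ by
      rw [smul_sub, add_smul]; abel]
    have : 1 / (1 + t) + 1 / (1 + t) * t = 1 := by field_simp
    rw [this, one_smul]
    have : (t / (1 + t)) • a₀ - (1 / (1 + t) * t) • a₀ = 0 := by
      rw [show t / (1 + t) = 1 / (1 + t) * t by ring, sub_self]
    rw [show (t / (1 + t)) • a₀ + (x - (1 / (1 + t) * t) • a₀)
        = x + ((t / (1 + t)) • a₀ - (1 / (1 + t) * t) • a₀) by abel, this, add_zero]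
  have hin : x ∈ interior A := by
    rw [hxcombo]
    apply hAconv.combo_interior_closure_mem_interior
    · rw [hA.interior_eq]; exact ha₀
    · exact h hy
    · positivity
    · positivity
    · field_simp
      ring
  rwa [hA.interior_eq] at hin

lemma eq_of_volume_le (hA : IsOpen A) (hB : IsOpen B) (hAconv : Convex ℝ A)
    (hAB : A ⊆ B) (hfin : volume B ≠ ⊤) (hvol : volume B ≤ volume A) : A = B := by
  rcases A.eq_empty_or_nonempty with rfl | hAne
  · -- volume B = 0 and B open ⇒ B = ∅
    have hB0 : volume B = 0 := le_antisymm (by simpa using hvol) (zero_le)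
    rcases B.eq_empty_or_nonempty with h | h
    · exact h.symm
    · exact absurd hB0 (ne_of_gt (hB.measure_pos volume h))
  have hcl : B ⊆ closure A := by
    by_contra hc
    -- B \ closure A is nonempty open with positive measure
    obtain ⟨x, hxB, hxc⟩ := not_subset.1 hc
    have hopen : IsOpen (B \ closure A) := hB.sdiff isClosed_closure
    have hpos : 0 < volume (B \ closure A) := hopen.measure_pos volume ⟨x, hxB, hxc⟩
    have hsplit : volume (B ∩ closure A) + volume (B \ closure A) = volume B := by
      rw [add_comm]
      exact measure_diff_add_inter B isClosed_closure.measurableSet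
    have hge : volume A ≤ volume (B ∩ closure A) :=
      measure_mono (subset_inter hAB subset_closure)
    have : volume B < volume (B ∩ closure A) + volume (B \ closure A) := by
      calc volume B ≤ volume A := hvol
        _ ≤ volume (B ∩ closure A) := hge
        _ < volume (B ∩ closure A) + volume (B \ closure A) := by
            apply ENNReal.lt_add_right _ (ne_of_gt hpos)
            exact ne_top_of_le_ne_top hfin (measure_mono (inter_subset_left))
    rw [hsplit] at this
    exact absurd this (lt_irrefl _)
  exact le_antisymm hAB (open_subset_of_subset_closure hA hAconv hAne hB hcl)

/-- If a nonempty open subset of a convex open set is proper, its frontier meets the set. -/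
lemma frontier_meet (hΩopen : IsOpen Ω) (hΩconv : Convex ℝ Ω) (hA : IsOpen A) (hAconv : Convex ℝ A)
    (hAne : A.Nonempty) (hsub : A ⊆ Ω) (hne : A ≠ Ω) : ∃ x ∈ frontier A, x ∈ Ω := by
  by_contra hcon
  push_neg at hcon
  have hpre := hΩconv.isPreconnected
  have hsub' : Ω ⊆ A ∪ (closure A)ᶜ := by
    intro x hx
    by_cases hxA : x ∈ A
    · exact Or.inl hxA
    · refine Or.inr fun hxc => ?_
      exact absurd hx (hcon x ⟨hxc, fun hi => hxA (by rwa [hA.interior_eq] at hi)⟩)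
  have h1 : (Ω ∩ A).Nonempty := hAne.imp fun a ha => ⟨hsub ha, ha⟩
  have h2 : (Ω ∩ (closure A)ᶜ).Nonempty := by
    by_contra h2c
    have : Ω ⊆ closure A := by
      intro x hx
      by_contra hxc
      exact h2c ⟨x, hx, hxc⟩
    have hΩA : Ω ⊆ A := by
      exact open_subset_of_subset_closure hA hAconv hAne hΩopen this
    exact hne (le_antisymm hsub hΩA)
  obtain ⟨x, hxΩ, hxA, hxc⟩ := hpre A (closure A)ᶜ hA isClosed_closure.isOpen_compl hsub' h1 h2
  exact hxc (subset_closure hxA)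

end AuxMeasure
section AuxRadii

variable {φ : (Fin 2 → ℝ) → ℝ} {Ω : Set (Fin 2 → ℝ)}

lemma maxInradius_nonneg (φ : (Fin 2 → ℝ) → ℝ) (Ω : Set (Fin 2 → ℝ)) :
    0 ≤ maxInradius φ Ω :=
  Real.sSup_nonneg fun _ hx => hx.1.le

lemma maxRollRadius_nonneg (φ : (Fin 2 → ℝ) → ℝ) (Ω : Set (Fin 2 → ℝ)) :
    0 ≤ maxRollRadius φ Ω :=
  Real.sSup_nonneg fun _ hx => hx.1.le

/-- Exit point of a ray from an interior point of a bounded open set. -/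
lemma ray_exit (hΩopen : IsOpen Ω) (hb : Bornology.IsBounded Ω) {x : Fin 2 → ℝ}
    (hx : x ∈ Ω) {w : Fin 2 → ℝ} (hw : w ≠ 0) :
    ∃ τ : ℝ, 0 < τ ∧ x + τ • w ∈ frontier Ω := by
  obtain ⟨M, hM⟩ := hb.subset_closedBall 0
  have hwpos : 0 < ‖w‖ := norm_pos_iff.2 hw
  set T : Set ℝ := {τ : ℝ | 0 ≤ τ ∧ x + τ • w ∉ Ω} with hT
  have hxM : ‖x‖ ≤ M := by
    have := hM hx
    simpa [Metric.mem_closedBall, dist_zero_right] using this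
  have hMnn : 0 ≤ M := le_trans (norm_nonneg x) hxM
  have hTne : T.Nonempty := by
    refine ⟨(M + ‖x‖ + 1) / ‖w‖, div_nonneg (by linarith [norm_nonneg x]) hwpos.le,
      fun hmem => ?_⟩
    have hzM : ‖x + ((M + ‖x‖ + 1) / ‖w‖) • w‖ ≤ M := by
      have := hM hmem
      simpa [Metric.mem_closedBall, dist_zero_right] using this
    have hnorm : ‖((M + ‖x‖ + 1) / ‖w‖) • w‖ = M + ‖x‖ + 1 := by
      rw [norm_smul, Real.norm_eq_abs, abs_of_nonneg (by positivity), div_mul_cancel₀]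
      · exact ne_of_gt hwpos
    have := norm_sub_le (x + ((M + ‖x‖ + 1) / ‖w‖) • w) x
    simp only [add_sub_cancel_left] at this
    rw [hnorm] at this
    linarith
  have hbd : BddBelow T := ⟨0, fun τ hτ => hτ.1⟩
  set τs : ℝ := sInf T with hτs
  have hmemsub : ∀ τ : ℝ, 0 ≤ τ → τ < τs → x + τ • w ∈ Ω := by
    intro τ h0 hlt
    by_contra h
    exact absurd (csInf_le hbd ⟨h0, h⟩) (not_le.2 hlt)
  have hτnn : 0 ≤ τs := le_csInf hTne fun τ hτ => hτ.1
  have hτpos : 0 < τs := by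
    obtain ⟨ε, hε, hball⟩ := Metric.isOpen_iff.1 hΩopen x hx
    have : ε / (2 * ‖w‖) ≤ τs := by
      apply le_csInf hTne
      intro τ hτ
      by_contra hc
      push_neg at hc
      apply hτ.2
      apply hball
      rw [Metric.mem_ball, dist_eq_norm]
      have : x + τ • w - x = τ • w := by abel
      rw [this, norm_smul, Real.norm_eq_abs, abs_of_nonneg hτ.1]
      calc τ * ‖w‖ < ε / (2 * ‖w‖) * ‖w‖ := mul_lt_mul_of_pos_right hc hwpos
        _ = ε / 2 := by field_simp
        _ < ε := by linarith
    have : 0 < ε / (2 * ‖w‖) := by positivity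
    linarith
  refine ⟨τs, hτpos, ?_, ?_⟩
  · -- closure
    rw [Metric.mem_closure_iff]
    intro ε hε
    set τ : ℝ := max 0 (τs - ε / (2 * ‖w‖)) with hτdef
    have hτ0 : 0 ≤ τ := le_max_left _ _
    have hτlt : τ < τs := by
      apply max_lt hτpos
      have : 0 < ε / (2 * ‖w‖) := by positivity
      linarith
    refine ⟨x + τ • w, hmemsub τ hτ0 hτlt, ?_⟩
    rw [dist_eq_norm]
    have he : x + τs • w - (x + τ • w) = (τs - τ) • w := by
      rw [sub_smul]; abel
    rw [he, norm_smul, Real.norm_eq_abs, abs_of_nonneg (by linarith)]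
    have hτge : τs - τ ≤ ε / (2 * ‖w‖) := by
      have := le_max_right 0 (τs - ε / (2 * ‖w‖))
      have h2 : τs - ε / (2 * ‖w‖) ≤ τ := le_max_right _ _
      linarith
    calc (τs - τ) * ‖w‖ ≤ ε / (2 * ‖w‖) * ‖w‖ :=
          mul_le_mul_of_nonneg_right hτge (norm_nonneg w)
      _ = ε / 2 := by field_simp
      _ < ε := by linarith
  · -- not in interior
    rw [hΩopen.interior_eq]
    intro hmem
    obtain ⟨ε, hε, hball⟩ := Metric.isOpen_iff.1 hΩopen _ hmem
    have hlt : τs < τs + ε / (2 * ‖w‖) := by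
      have : 0 < ε / (2 * ‖w‖) := by positivity
      linarith
    obtain ⟨τ, hτT, hτlt⟩ := (csInf_lt_iff hbd hTne).1 hlt
    have hτge : τs ≤ τ := csInf_le hbd hτT
    apply hτT.2
    apply hball
    rw [Metric.mem_ball, dist_eq_norm]
    have he : x + τ • w - (x + τs • w) = (τ - τs) • w := by
      rw [sub_smul]; abel
    rw [he, norm_smul, Real.norm_eq_abs, abs_of_nonneg (by linarith)]
    calc (τ - τs) * ‖w‖ < ε / (2 * ‖w‖) * ‖w‖ :=
          mul_lt_mul_of_pos_right (by linarith) hwpos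
      _ = ε / 2 := by field_simp
      _ < ε := by linarith

lemma frontier_nonempty (hφ : IsNorm φ) (hΩopen : IsOpen Ω) (hb : Bornology.IsBounded Ω)
    (hne : Ω.Nonempty) : (frontier Ω).Nonempty := by
  obtain ⟨x, hx⟩ := hne
  obtain ⟨u, hu⟩ := (NormedSpace.sphere_nonempty (E := Fin 2 → ℝ) (x := 0) (r := 1)).2 zero_le_one
  have hu1 : ‖u‖ = 1 := by simpa using hu
  have hune : u ≠ 0 := by intro h; rw [h] at hu1; simp at hu1
  obtain ⟨τ, _, hτ⟩ := ray_exit hΩopen hb hx hune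
  exact ⟨_, hτ⟩

lemma bddAbove_inradiusSet (hφ : IsNorm φ) (hb : Bornology.IsBounded Ω) :
    BddAbove {R : ℝ | 0 < R ∧ ∃ x, wulffBall φ x R ⊆ Ω} := by
  obtain ⟨M₀, hM₀⟩ := hb.subset_closedBall 0
  set M : ℝ := max M₀ 0 with hM
  have hMsub : Ω ⊆ Metric.closedBall 0 M :=
    hM₀.trans (Metric.closedBall_subset_closedBall (le_max_left _ _))
  have hMnn : 0 ≤ M := le_max_right _ _
  obtain ⟨u, hu⟩ := (NormedSpace.sphere_nonempty (E := Fin 2 → ℝ) (x := 0) (r := 1)).2 zero_le_one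
  have hu1 : ‖u‖ = 1 := by simpa using hu
  have hune : u ≠ 0 := by intro h; rw [h] at hu1; simp at hu1
  have hupos : 0 < φ u := by
    rcases lt_or_eq_of_le (hφ.nonneg u) with h | h
    · exact h
    · exact absurd ((hφ.eq_zero_iff u).1 h.symm) hune
  refine ⟨φ u * (2 * M + 1), fun R hR => ?_⟩
  obtain ⟨hRpos, x, hx⟩ := hR
  by_contra hc
  push_neg at hc
  set t : ℝ := 2 * M + 1 with ht
  have htpos : 0 < t := by linarith
  have hmem : x + t • u ∈ Ω := by
    apply hx
    show φ (x + t • u - x) < R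
    have he : x + t • u - x = t • u := by abel
    rw [he, hφ.smul_nn htpos.le]
    calc t * φ u = φ u * t := mul_comm _ _
      _ < R := hc
  have hxΩ : x ∈ Ω := hx (self_mem_wulffBall hφ hRpos)
  have h1 : ‖x‖ ≤ M := by simpa [dist_eq_norm] using Metric.mem_closedBall.1 (hMsub hxΩ)
  have h2 : ‖x + t • u‖ ≤ M := by simpa [dist_eq_norm] using Metric.mem_closedBall.1 (hMsub hmem)
  have h3 : ‖t • u‖ = t := by
    rw [norm_smul, Real.norm_eq_abs, abs_of_nonneg htpos.le, hu1, mul_one]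
  have := norm_sub_le (x + t • u) x
  simp only [add_sub_cancel_left] at this
  rw [h3] at this
  linarith

lemma mem_inradiusSet_of_rW (hφ : IsNorm φ) (hΩopen : IsOpen Ω) (hb : Bornology.IsBounded Ω)
    (hne : Ω.Nonempty) {r : ℝ} (hr : 0 < r) (h : rWCond φ Ω r) :
    r ∈ {R : ℝ | 0 < R ∧ ∃ x, wulffBall φ x R ⊆ Ω} := by
  obtain ⟨z, hz⟩ := frontier_nonempty hφ hΩopen hb hne
  obtain ⟨y, hy, _⟩ := h z hz
  exact ⟨hr, y, hy⟩

lemma maxRollRadius_le (hφ : IsNorm φ) (hΩopen : IsOpen Ω) (hb : Bornology.IsBounded Ω)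
    (hne : Ω.Nonempty) : maxRollRadius φ Ω ≤ maxInradius φ Ω := by
  rcases Set.eq_empty_or_nonempty {r : ℝ | 0 < r ∧ rWCond φ Ω r} with h | h
  · rw [maxRollRadius, h, Real.sSup_empty]
    exact maxInradius_nonneg φ Ω
  · apply csSup_le h
    intro r hr
    exact le_csSup (bddAbove_inradiusSet hφ hb)
      (mem_inradiusSet_of_rW hφ hΩopen hb hne hr.1 hr.2)

lemma inradiusSet_nonempty (hφ : IsNorm φ) (hΩopen : IsOpen Ω)
    (hne : Ω.Nonempty) : ∃ R₁ : ℝ, 0 < R₁ ∧ R₁ ∈ {R : ℝ | 0 < R ∧ ∃ x, wulffBall φ x R ⊆ Ω} := by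
  obtain ⟨x, hx⟩ := hne
  obtain ⟨ε, hε, hball⟩ := Metric.isOpen_iff.1 hΩopen x hx
  obtain ⟨c, hc, hlow⟩ := hφ.exists_lower
  refine ⟨c * ε / 2, by positivity, by positivity, x, fun z hz => ?_⟩
  apply hball
  rw [Metric.mem_ball, dist_eq_norm]
  have h1 : c * ‖z - x‖ ≤ φ (z - x) := hlow _
  have h2 : φ (z - x) < c * ε / 2 := hz
  have h3 : ‖z - x‖ < ε / 2 := by
    rw [← mul_lt_mul_iff_right₀ hc]
    calc c * ‖z - x‖ ≤ φ (z - x) := h1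
      _ < c * ε / 2 := h2
      _ = c * (ε / 2) := by ring
  linarith

lemma maxInradius_pos (hφ : IsNorm φ) (hΩopen : IsOpen Ω) (hb : Bornology.IsBounded Ω)
    (hne : Ω.Nonempty) : 0 < maxInradius φ Ω := by
  obtain ⟨R₁, hR₁, hmem⟩ := inradiusSet_nonempty hφ hΩopen hne
  exact lt_of_lt_of_le hR₁ (le_csSup (bddAbove_inradiusSet hφ hb) hmem)

/-- The maximal inradius is attained. -/
lemma maxInradius_attained (hφ : IsNorm φ) (hΩopen : IsOpen Ω) (hb : Bornology.IsBounded Ω)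
    (hne : Ω.Nonempty) : ∃ x₀, wulffBall φ x₀ (maxInradius φ Ω) ⊆ Ω := by
  set R : ℝ := maxInradius φ Ω with hRdef
  have hR : 0 < R := maxInradius_pos hφ hΩopen hb hne
  have hsetne : {R : ℝ | 0 < R ∧ ∃ x, wulffBall φ x R ⊆ Ω}.Nonempty := by
    obtain ⟨R₁, _, hmem⟩ := inradiusSet_nonempty hφ hΩopen hne
    exact ⟨R₁, hmem⟩
  set sq : ℕ → ℝ := fun n => R - R / (n + 2) with hsq
  have hsqpos : ∀ n, 0 < sq n := by
    intro n
    have h1 : R / ((n : ℝ) + 2) < R := by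
      rw [div_lt_iff₀ (by positivity)]
      nlinarith
    simp only [hsq]
    linarith
  have hsqlt : ∀ n, sq n < R := by
    intro n
    have : 0 < R / ((n : ℝ) + 2) := by positivity
    simp only [hsq]
    linarith
  have hsqmono : Monotone sq := by
    intro m n hmn
    simp only [hsq]
    have h2 : R / ((n : ℝ) + 2) ≤ R / ((m : ℝ) + 2) := by
      apply div_le_div_of_nonneg_left hR.le (by positivity)
      have : (m : ℝ) ≤ n := Nat.cast_le.2 hmn
      linarith
    linarith
  have hsqlim : ∀ a : ℝ, a < R → ∃ n : ℕ, a < sq n := by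
    intro a ha
    obtain ⟨n, hn⟩ := exists_nat_gt (R / (R - a))
    refine ⟨n, ?_⟩
    have hRa : 0 < R - a := by linarith
    have hn2 : R / (R - a) < (n : ℝ) + 2 := by linarith [Nat.cast_nonneg (α := ℝ) n]
    have h3 : R / ((n : ℝ) + 2) < R - a := by
      rw [div_lt_iff₀ (by positivity)]
      rw [div_lt_iff₀ hRa] at hn2
      nlinarith
    simp only [hsq]
    linarith
  set Z : ℕ → Set (Fin 2 → ℝ) := fun n => {y | wulffBall φ y (sq n) ⊆ Ω} ∩ closure Ω with hZ
  have hZclosed : ∀ n, IsClosed (Z n) := fun n =>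
    (isClosed_centers hφ Ω (sq n)).inter isClosed_closure
  have hZne : ∀ n, (Z n).Nonempty := by
    intro n
    obtain ⟨r', hr', hltr'⟩ := exists_lt_of_lt_csSup hsetne (hsqlt n)
    obtain ⟨hr'pos, y, hy⟩ := hr'
    refine ⟨y, fun z hz => hy (lt_of_lt_of_le hz hltr'.le), ?_⟩
    exact subset_closure (hy (self_mem_wulffBall hφ hr'pos))
  have hZanti : ∀ n : ℕ, Z (n + 1) ⊆ Z n := by
    intro n
    apply inter_subset_inter_left
    intro y hy
    exact fun z hz => hy (lt_of_lt_of_le hz (hsqmono (Nat.le_succ n)))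
  have hZcpt : IsCompact (Z 0) := by
    apply Metric.isCompact_of_isClosed_isBounded (hZclosed 0)
    exact hb.closure.subset (inter_subset_right)
  obtain ⟨y, hy⟩ := IsCompact.nonempty_iInter_of_sequence_nonempty_isCompact_isClosed
    Z hZanti hZne hZcpt hZclosed
  refine ⟨y, fun z hz => ?_⟩
  obtain ⟨n, hn⟩ := hsqlim (φ (z - y)) hz
  have hyn : y ∈ Z n := mem_iInter.1 hy n
  exact hyn.1 hn

/-- The rW condition is downward closed. -/
lemma rWCond_mono (hφ : IsNorm φ) {r r' : ℝ} (hr : 0 < r) (hrr' : r ≤ r')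
    (h : rWCond φ Ω r') : rWCond φ Ω r := by
  intro x hx
  obtain ⟨y, hyΩ, hxy⟩ := h x hx
  have hr' : 0 < r' := lt_of_lt_of_le hr hrr'
  have hφxy : φ (x - y) = r' := phi_eq_of_mem_frontier hφ hxy
  refine ⟨x + (r / r') • (y - x), fun w hw => hyΩ ?_, ?_⟩
  · show φ (w - y) < r'
    have he : w - y = (w - (x + (r / r') • (y - x))) + ((x + (r / r') • (y - x)) - y) := by
      abel
    have he2 : (x + (r / r') • (y - x)) - y = (1 - r / r') • (x - y) := by
      module
    have hφ2 : φ ((x + (r / r') • (y - x)) - y) = r' - r := by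
      rw [he2, hφ.smul_nn (by rw [sub_nonneg, div_le_one hr']; exact hrr'), hφxy]
      rw [sub_mul, one_mul, div_mul_cancel₀ _ (ne_of_gt hr')]
    calc φ (w - y) ≤ φ (w - (x + (r / r') • (y - x))) + φ ((x + (r / r') • (y - x)) - y) := by
          rw [he]; exact hφ.add_le _ _
      _ < r + (r' - r) := by
          rw [hφ2]
          exact add_lt_add_left (show φ (w - (x + (r / r') • (y - x))) < r from hw) _
      _ = r' := by ring
  · apply mem_frontier_wulffBall hφ hr
    have he : x - (x + (r / r') • (y - x)) = (r / r') • (x - y) := by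
      module
    rw [he, hφ.smul_nn (by positivity), hφxy]
    rw [div_mul_cancel₀ _ (ne_of_gt hr')]

end AuxRadii
section AuxCore
open Topology

variable {φ : (Fin 2 → ℝ) → ℝ} {Ω : Set (Fin 2 → ℝ)}

/-- Rolling property of the plaquette: from any frontier point of `Ω^t` there is a
Wulff ball of radius `t` inside `Ω` tangent to it. -/
lemma plaquette_roll (hφ : IsNorm φ) (hΩopen : IsOpen Ω) (hb : Bornology.IsBounded Ω)
    {t : ℝ} (ht : 0 < t) {x : Fin 2 → ℝ} (hx : x ∈ frontier (plaquette φ Ω t)) :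
    ∃ y, wulffBall φ y t ⊆ Ω ∧ φ (x - y) = t := by
  obtain ⟨C, hC, hub⟩ := hφ.exists_upper
  set K : ℕ → Set (Fin 2 → ℝ) :=
    fun n => {y | wulffBall φ y t ⊆ Ω} ∩ {y | φ (x - y) ≤ t + 1 / (n + 1)} with hK
  have hKclosed : ∀ n, IsClosed (K n) := by
    intro n
    apply (isClosed_centers hφ Ω t).inter
    exact isClosed_le (hφ.continuous'.comp (continuous_const.sub continuous_id)) continuous_const
  have hKne : ∀ n, (K n).Nonempty := by
    intro n
    have hxcl : x ∈ closure (plaquette φ Ω t) := frontier_subset_closure hx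
    have hεpos : 0 < 1 / (((n : ℝ) + 1) * C) := by positivity
    obtain ⟨x', hx', hdist⟩ := Metric.mem_closure_iff.1 hxcl _ hεpos
    rw [mem_plaquette (ne_of_gt ht)] at hx'
    obtain ⟨y, hy, hx'y⟩ := hx'
    refine ⟨y, hy, ?_⟩
    show φ (x - y) ≤ t + 1 / ((n : ℝ) + 1)
    have h1 : φ (x - y) ≤ φ (x - x') + φ (x' - y) := by
      have := hφ.add_le (x - x') (x' - y)
      simpa [sub_add_sub_cancel] using this
    have h2 : φ (x - x') ≤ C * ‖x - x'‖ := hub _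
    have h3 : ‖x - x'‖ < 1 / (((n : ℝ) + 1) * C) := by
      rw [← dist_eq_norm]; exact hdist
    have h4 : C * ‖x - x'‖ < 1 / ((n : ℝ) + 1) := by
      have := mul_lt_mul_of_pos_left h3 hC
      calc C * ‖x - x'‖ < C * (1 / (((n : ℝ) + 1) * C)) := this
        _ = 1 / ((n : ℝ) + 1) := by field_simp
    have h5 : φ (x' - y) < t := hx'y
    linarith
  have hKanti : ∀ n : ℕ, K (n + 1) ⊆ K n := by
    intro n y hy
    have h2' := hy.2
    simp only [mem_setOf_eq] at h2'
    push_cast at h2'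
    refine ⟨hy.1, ?_⟩
    show φ (x - y) ≤ t + 1 / ((n : ℝ) + 1)
    have h1 : (1 : ℝ) / ((n : ℝ) + 1 + 1) ≤ 1 / ((n : ℝ) + 1) := by
      apply div_le_div_of_nonneg_left zero_le_one (by positivity)
      linarith
    linarith
  have hKcpt : IsCompact (K 0) := by
    apply Metric.isCompact_of_isClosed_isBounded (hKclosed 0)
    exact hb.subset (fun y hy => centers_subset hφ ht hy.1)
  obtain ⟨y, hy⟩ := IsCompact.nonempty_iInter_of_sequence_nonempty_isCompact_isClosed
    K hKanti hKne hKcpt hKclosed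
  have hyin : ∀ n : ℕ, y ∈ K n := fun n => mem_iInter.1 hy n
  refine ⟨y, (hyin 0).1, ?_⟩
  have hle : φ (x - y) ≤ t := by
    by_contra hc
    push_neg at hc
    obtain ⟨n, hn⟩ := exists_nat_one_div_lt (show 0 < φ (x - y) - t by linarith)
    have h2' := (hyin n).2
    simp only [mem_setOf_eq] at h2'
    linarith
  have hge : t ≤ φ (x - y) := by
    by_contra hc
    push_neg at hc
    have hxmem : x ∈ plaquette φ Ω t :=
      wulffBall_subset_plaquette (ne_of_gt ht) (hyin 0).1 hc
    rw [(isOpen_plaquette hφ hΩopen t).frontier_eq] at hx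
    exact hx.2 hxmem
  linarith

/-- Helper sequence increasing to `t`. -/
lemma seq_to (t : ℝ) (ht : 0 < t) :
    ∃ sq : ℕ → ℝ, (∀ n, 0 < sq n) ∧ (∀ n, sq n < t) ∧ Monotone sq ∧
      (∀ a : ℝ, a < t → ∃ n : ℕ, a < sq n) := by
  refine ⟨fun n => t - t / (n + 2), fun n => ?_, fun n => ?_, ?_, ?_⟩
  · have h1 : t / ((n : ℝ) + 2) < t := by
      rw [div_lt_iff₀ (by positivity)]
      nlinarith
    simp only
    linarith
  · have : 0 < t / ((n : ℝ) + 2) := by positivity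
    simp only
    linarith
  · intro m n hmn
    simp only
    have h2 : t / ((n : ℝ) + 2) ≤ t / ((m : ℝ) + 2) := by
      apply div_le_div_of_nonneg_left ht.le (by positivity)
      have : (m : ℝ) ≤ n := Nat.cast_le.2 hmn
      linarith
    linarith
  · intro a ha
    obtain ⟨n, hn⟩ := exists_nat_gt (t / (t - a))
    refine ⟨n, ?_⟩
    have hta : 0 < t - a := by linarith
    have hn2 : t / (t - a) < (n : ℝ) + 2 := by linarith [Nat.cast_nonneg (α := ℝ) n]
    have h3 : t / ((n : ℝ) + 2) < t - a := by
      rw [div_lt_iff₀ (by positivity)]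
      rw [div_lt_iff₀ hta] at hn2
      nlinarith
    simp only
    linarith

/-- Left-continuity of the plaquette volume. -/
lemma plaquette_left_approx (hφ : IsNorm φ) (hΩopen : IsOpen Ω)
    (hb : Bornology.IsBounded Ω) (hconv : Convex ℝ Ω) {t : ℝ} (ht : 0 < t) {ε : ℝ}
    (hε : 0 < ε) :
    ∃ s : ℝ, 0 < s ∧ s < t ∧
      (volume (plaquette φ Ω s)).toReal ≤ (volume (plaquette φ Ω t)).toReal + ε := by
  obtain ⟨sq, hsqpos, hsqlt, hsqmono, hsqlim⟩ := seq_to t ht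
  set A : ℕ → Set (Fin 2 → ℝ) := fun n => plaquette φ Ω (sq n) with hA
  have hAanti : Antitone A := fun m n hmn =>
    plaquette_antitone hφ (hsqpos m).le (hsqmono hmn)
  have hsub : ⋂ n, A n ⊆ closure (plaquette φ Ω t) := by
    intro x hx
    have hxn : ∀ n, x ∈ A n := fun n => mem_iInter.1 hx n
    set K : ℕ → Set (Fin 2 → ℝ) :=
      fun n => {y | wulffBall φ y (sq n) ⊆ Ω} ∩ {y | φ (x - y) ≤ t} with hK
    have hKclosed : ∀ n, IsClosed (K n) := by
      intro n
      apply (isClosed_centers hφ Ω (sq n)).inter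
      exact isClosed_le (hφ.continuous'.comp (continuous_const.sub continuous_id))
        continuous_const
    have hKne : ∀ n, (K n).Nonempty := by
      intro n
      have := hxn n
      rw [hA, mem_plaquette (ne_of_gt (hsqpos n))] at this
      obtain ⟨y, hy, hxy⟩ := this
      exact ⟨y, hy, le_of_lt (lt_trans hxy (hsqlt n))⟩
    have hKanti : ∀ n : ℕ, K (n + 1) ⊆ K n := by
      intro n y hy
      refine ⟨fun z hz => hy.1 (lt_of_lt_of_le hz (hsqmono (Nat.le_succ n))), hy.2⟩
    have hKcpt : IsCompact (K 0) := by
      apply Metric.isCompact_of_isClosed_isBounded (hKclosed 0)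
      exact hb.subset (fun y hy => centers_subset hφ (hsqpos 0) hy.1)
    obtain ⟨y, hy⟩ := IsCompact.nonempty_iInter_of_sequence_nonempty_isCompact_isClosed
      K hKanti hKne hKcpt hKclosed
    have hyn : ∀ n, y ∈ K n := fun n => mem_iInter.1 hy n
    have hyt : wulffBall φ y t ⊆ Ω := by
      intro z hz
      obtain ⟨n, hn⟩ := hsqlim (φ (z - y)) hz
      exact (hyn n).1 hn
    have hxy : φ (x - y) ≤ t := (hyn 0).2
    exact closure_mono (wulffBall_subset_plaquette (ne_of_gt ht) hyt)
      (mem_closure_wulffBall hφ ht hxy)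
  -- measure of the intersection equals the volume at t
  have hfin : volume (A 0) ≠ ⊤ :=
    ne_top_of_le_ne_top hb.measure_lt_top.ne (measure_mono (plaquette_subset φ Ω (sq 0)))
  have hvol : volume (⋂ n, A n) = volume (plaquette φ Ω t) := by
    apply le_antisymm
    · calc volume (⋂ n, A n) ≤ volume (closure (plaquette φ Ω t)) := measure_mono hsub
        _ = volume (plaquette φ Ω t) := vol_closure_convex (convex_plaquette hφ hconv t)
    · apply measure_mono
      apply subset_iInter
      intro n
      exact plaquette_antitone hφ (hsqpos n).le (hsqlt n).le
  have htend : Tendsto (fun n => volume (A n)) atTop (𝓝 (volume (plaquette φ Ω t))) := by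
    have := tendsto_measure_iInter_atTop
      (fun n => (isOpen_plaquette hφ hΩopen (sq n)).measurableSet.nullMeasurableSet)
      hAanti ⟨0, hfin⟩
    rw [hvol] at this
    exact this
  have hfin' : volume (plaquette φ Ω t) ≠ ⊤ :=
    ne_top_of_le_ne_top hb.measure_lt_top.ne (measure_mono (plaquette_subset φ Ω t))
  have htendr : Tendsto (fun n => (volume (A n)).toReal) atTop
      (𝓝 ((volume (plaquette φ Ω t)).toReal)) :=
    (ENNReal.tendsto_toReal hfin').comp htend
  obtain ⟨N, hN⟩ := Metric.tendsto_atTop.1 htendr ε hε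
  have hd := hN N (le_refl N)
  rw [Real.dist_eq, abs_lt] at hd
  exact ⟨sq N, hsqpos N, hsqlt N, by simp only [hA] at hd ⊢; linarith [hd.2]⟩

/-- The homothety estimate for plaquette volumes. -/
lemma plaquette_homothety (hφ : IsNorm φ) (hconv : Convex ℝ Ω) {x₀ : Fin 2 → ℝ} {R : ℝ}
    (hx₀ : wulffBall φ x₀ R ⊆ Ω) {s t : ℝ} (hs0 : 0 ≤ s) (hst : s ≤ t) (htR : t ≤ R)
    (hsR : s < R) :
    ENNReal.ofReal (((R - t) / (R - s)) ^ 2) * volume (plaquette φ Ω s) ≤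
      volume (plaquette φ Ω t) := by
  have hR : 0 < R := lt_of_le_of_lt hs0 hsR
  set l : ℝ := (R - t) / (R - s) with hl
  have hRs : 0 < R - s := by linarith
  have hl0 : 0 ≤ l := div_nonneg (by linarith) hRs.le
  have hl1 : l ≤ 1 := by rw [hl, div_le_one hRs]; linarith
  have hlst : l * s + (1 - l) * R = t := by
    have h0 : R - s ≠ 0 := ne_of_gt hRs
    rw [hl]
    field_simp
    ring
  have key : ∀ z ∈ plaquette φ Ω s, x₀ + l • (z - x₀) ∈ plaquette φ Ω t := by
    intro z hz
    rcases eq_or_lt_of_le hst with rfl | hstlt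
    · -- s = t, l = 1
      have hl1' : l = 1 := by rw [hl]; exact div_self (ne_of_gt hRs)
      have : x₀ + l • (z - x₀) = z := by rw [hl1']; module
      rwa [this]
    have ht0 : 0 < t := lt_of_le_of_lt hs0 hstlt
    have hllt1 : l < 1 := by
      rw [hl, div_lt_one hRs]
      linarith
    rcases eq_or_lt_of_le hs0 with hs0' | hspos
    · -- s = 0
      have hzΩ : z ∈ Ω := by
        rw [← hs0', plaquette_zero] at hz
        exact hz
      have hrad : (1 - l) * R = t := by
        rw [← hs0'] at hlst
        linarith [hlst]
      have hball := combo_ball_point_subset hφ hconv hR hx₀ hzΩ hl0 hllt1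
      rw [hrad] at hball
      have hcenter : x₀ + l • (z - x₀) = (1 - l) • x₀ + l • z := by module
      rw [hcenter]
      exact wulffBall_subset_plaquette (ne_of_gt ht0) hball (self_mem_wulffBall hφ ht0)
    · -- s > 0
      rw [mem_plaquette (ne_of_gt hspos)] at hz
      obtain ⟨y, hy, hzy⟩ := hz
      have hball := combo_ball_subset hφ hconv hR hspos hx₀ hy (l := l) hl0 hl1
      have hrad : (1 - l) * R + l * s = t := by linarith [hlst]
      rw [hrad] at hball
      rw [mem_plaquette (ne_of_gt ht0)]
      refine ⟨(1 - l) • x₀ + l • y, hball, ?_⟩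
      show φ (x₀ + l • (z - x₀) - ((1 - l) • x₀ + l • y)) < t
      have he : x₀ + l • (z - x₀) - ((1 - l) • x₀ + l • y) = l • (z - y) := by module
      rw [he, hφ.smul_nn hl0]
      rcases eq_or_lt_of_le hl0 with hl0' | hlpos
      · rw [← hl0', zero_mul]; exact ht0
      · have h1 : l * φ (z - y) < l * s := mul_lt_mul_of_pos_left hzy hlpos
        nlinarith [mul_nonneg (by linarith : (0:ℝ) ≤ 1 - l) hR.le]
  have himg : AffineMap.homothety x₀ l '' plaquette φ Ω s ⊆ plaquette φ Ω t := by
    rintro _ ⟨z, hz, rfl⟩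
    have : AffineMap.homothety x₀ l z = x₀ + l • (z - x₀) := by
      rw [AffineMap.homothety_apply]
      simp only [vsub_eq_sub, vadd_eq_add]
      abel
    rw [this]
    exact key z hz
  calc ENNReal.ofReal (l ^ 2) * volume (plaquette φ Ω s)
      = ENNReal.ofReal (|l ^ Module.finrank ℝ (Fin 2 → ℝ)|) * volume (plaquette φ Ω s) := by
        rw [Module.finrank_fin_fun, abs_of_nonneg (by positivity)]
    _ = volume (AffineMap.homothety x₀ l '' plaquette φ Ω s) :=
        (MeasureTheory.Measure.addHaar_image_homothety volume x₀ l _).symm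
    _ ≤ volume (plaquette φ Ω t) := measure_mono himg

/-- Under the rW-condition, the plaquette fills the whole convex set. -/
lemma rW_full (hφ : IsNorm φ) (hΩopen : IsOpen Ω) (hb : Bornology.IsBounded Ω)
    (hconv : Convex ℝ Ω) {r : ℝ} (hr : 0 < r) (hrW : rWCond φ Ω r) :
    plaquette φ Ω r = Ω := by
  apply eq_of_volume_le (isOpen_plaquette hφ hΩopen r) hΩopen (convex_plaquette hφ hconv r)
    (plaquette_subset φ Ω r) hb.measure_lt_top.ne
  have hΩsub : Ω ⊆ closure (plaquette φ Ω r) := by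
    intro x hx
    by_contra hxc
    have hclconv : Convex ℝ (closure (plaquette φ Ω r)) :=
      (convex_plaquette hφ hconv r).closure
    obtain ⟨f, u, hfA, hfx⟩ :=
      geometric_hahn_banach_closed_point hclconv isClosed_closure hxc
    obtain ⟨u₀, hu₀⟩ := (NormedSpace.sphere_nonempty (E := Fin 2 → ℝ) (x := 0) (r := 1)).2
      zero_le_one
    have hu₀1 : ‖u₀‖ = 1 := by simpa using hu₀
    have hu₀ne : u₀ ≠ 0 := by intro h; rw [h] at hu₀1; simp at hu₀1
    set w : Fin 2 → ℝ := if 0 ≤ f u₀ then u₀ else -u₀ with hw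
    have hwne : w ≠ 0 := by
      rw [hw]
      split
      · exact hu₀ne
      · simpa using hu₀ne
    have hfw : 0 ≤ f w := by
      rw [hw]
      split
      · assumption
      · rename_i hneg
        push_neg at hneg
        rw [map_neg]
        linarith
    obtain ⟨τ, hτpos, hτ⟩ := ray_exit hΩopen hb hx hwne
    obtain ⟨y, hyΩ, hzy⟩ := hrW _ hτ
    have h1 : x + τ • w ∈ closure (plaquette φ Ω r) :=
      closure_mono (wulffBall_subset_plaquette (ne_of_gt hr) hyΩ)
        (frontier_subset_closure hzy)
    have h2 : f (x + τ • w) < u := hfA _ h1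
    have h3 : f (x + τ • w) = f x + τ * f w := by
      rw [map_add, ContinuousLinearMap.map_smul, smul_eq_mul]
    nlinarith [mul_nonneg hτpos.le hfw]
  calc volume Ω ≤ volume (closure (plaquette φ Ω r)) := measure_mono hΩsub
    _ = volume (plaquette φ Ω r) := vol_closure_convex (convex_plaquette hφ hconv r)

end AuxCore
section AuxStrict

open Topology

variable {φ : (Fin 2 → ℝ) → ℝ} {Ω : Set (Fin 2 → ℝ)}

lemma volume_plaquette_ne_top (hb : Bornology.IsBounded Ω) (r : ℝ) :
    volume (plaquette φ Ω r) ≠ ⊤ :=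
  ne_top_of_le_ne_top hb.measure_lt_top.ne (measure_mono (plaquette_subset φ Ω r))

lemma plaquette_strict (hφ : IsNorm φ) (hΩopen : IsOpen Ω) (hb : Bornology.IsBounded Ω)
    (hconv : Convex ℝ Ω) (hne : Ω.Nonempty) {s t : ℝ} (hs : maxRollRadius φ Ω ≤ s)
    (hst : s < t) (ht : t ≤ maxInradius φ Ω) :
    volume (plaquette φ Ω t) < volume (plaquette φ Ω s) := by
  have hr₀nn := maxRollRadius_nonneg φ Ω
  have hs0 : 0 ≤ s := le_trans hr₀nn hs
  have ht0 : 0 < t := lt_of_le_of_lt hs0 hst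
  have hsubset : plaquette φ Ω t ⊆ plaquette φ Ω s := plaquette_antitone hφ hs0 hst.le
  have hfin : volume (plaquette φ Ω s) ≠ ⊤ := volume_plaquette_ne_top hb s
  rcases lt_or_ge (volume (plaquette φ Ω t)) (volume (plaquette φ Ω s)) with h | h
  · exact h
  exfalso
  have hEq : plaquette φ Ω t = plaquette φ Ω s :=
    eq_of_volume_le (isOpen_plaquette hφ hΩopen t) (isOpen_plaquette hφ hΩopen s)
      (convex_plaquette hφ hconv t) hsubset hfin h
  have hSbdd : BddAbove {r : ℝ | 0 < r ∧ rWCond φ Ω r} := by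
    apply BddAbove.mono _ (bddAbove_inradiusSet hφ hb)
    intro r hr
    exact mem_inradiusSet_of_rW hφ hΩopen hb hne hr.1 hr.2
  by_cases hcase : plaquette φ Ω t = Ω
  · have hrW : rWCond φ Ω t := by
      intro x hx
      rw [← hcase] at hx
      obtain ⟨y, hy, hxy⟩ := plaquette_roll hφ hΩopen hb ht0 hx
      exact ⟨y, hy, mem_frontier_wulffBall hφ ht0 hxy⟩
    have : t ≤ maxRollRadius φ Ω := le_csSup hSbdd ⟨ht0, hrW⟩
    linarith
  · have hspos : 0 < s := by
      rcases eq_or_lt_of_le hs0 with h0 | h0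
      · exfalso
        apply hcase
        rw [hEq, ← h0, plaquette_zero]
      · exact h0
    have hAne : (plaquette φ Ω t).Nonempty := by
      obtain ⟨x₀, hx₀⟩ := maxInradius_attained hφ hΩopen hb hne
      have hR := maxInradius_pos hφ hΩopen hb hne
      have hx₀mem : φ (x₀ - x₀) < maxInradius φ Ω := by simp [hφ.zero', hR]
      obtain ⟨y', h1, h2⟩ := ball_in_ball hφ ht0 ht hx₀mem
      refine ⟨x₀, ?_⟩
      rw [mem_plaquette (ne_of_gt ht0)]
      refine ⟨y', fun w hw => hx₀ ?_, h1⟩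
      show φ (w - x₀) < maxInradius φ Ω
      calc φ (w - x₀) = φ ((w - y') + (y' - x₀)) := by rw [sub_add_sub_cancel]
        _ ≤ φ (w - y') + φ (y' - x₀) := hφ.add_le _ _
        _ < t + (maxInradius φ Ω - t) := add_lt_add_of_lt_of_le hw h2
        _ = maxInradius φ Ω := by ring
    obtain ⟨x, hxf, hxΩ⟩ := frontier_meet hΩopen hconv (isOpen_plaquette hφ hΩopen t)
      (convex_plaquette hφ hconv t) hAne (plaquette_subset φ Ω t) hcase
    obtain ⟨y, hyΩ, hxy⟩ := plaquette_roll hφ hΩopen hb ht0 hxf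
    obtain ⟨ε, hε, hball⟩ := Metric.isOpen_iff.1 hΩopen x hxΩ
    obtain ⟨c, hc, hlow⟩ := hφ.exists_lower
    set δ : ℝ := min (c * ε / 2) (t / 2) with hδ
    have hδpos : 0 < δ := lt_min (by positivity) (by linarith)
    have hδt : δ < t := lt_of_le_of_lt (min_le_right _ _) (by linarith)
    have hδball : wulffBall φ x δ ⊆ Ω := by
      intro z hz
      apply hball
      rw [Metric.mem_ball, dist_eq_norm]
      have h1 : c * ‖z - x‖ ≤ φ (z - x) := hlow _
      have h2 : φ (z - x) < δ := hz
      have h3 : δ ≤ c * ε / 2 := min_le_left _ _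
      have : c * ‖z - x‖ < c * (ε / 2) := by
        calc c * ‖z - x‖ ≤ φ (z - x) := h1
          _ < δ := h2
          _ ≤ c * ε / 2 := h3
          _ = c * (ε / 2) := by ring
      have := lt_of_mul_lt_mul_left this hc.le
      linarith
    have htδ : 0 < t - δ := by linarith
    set l : ℝ := min 1 ((t - s) / (t - δ)) with hl
    have hl0 : 0 < l := lt_min one_pos (div_pos (by linarith) htδ)
    have hl1 : l ≤ 1 := min_le_left _ _
    set ρ : ℝ := (1 - l) * t + l * δ with hρ
    have hρs : s ≤ ρ := by
      rcases le_or_gt ((t - s) / (t - δ)) 1 with hcase2 | hcase2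
      · have hleq : l = (t - s) / (t - δ) := min_eq_right hcase2
        have : ρ = t - l * (t - δ) := by rw [hρ]; ring
        rw [this, hleq]
        have : (t - s) / (t - δ) * (t - δ) = t - s := div_mul_cancel₀ _ (ne_of_gt htδ)
        rw [this]
        linarith
      · have hleq : l = 1 := min_eq_left hcase2.le
        have hδs : s ≤ δ := by
          rw [lt_div_iff₀ htδ] at hcase2
          nlinarith
        rw [hρ, hleq]
        simpa using hδs
    have hcombo : wulffBall φ ((1 - l) • y + l • x) ρ ⊆ Ω :=
      combo_ball_subset hφ hconv ht0 hδpos hyΩ hδball hl0.le hl1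
    have hxmem : x ∈ wulffBall φ ((1 - l) • y + l • x) ρ := by
      show φ (x - ((1 - l) • y + l • x)) < ρ
      have he : x - ((1 - l) • y + l • x) = (1 - l) • (x - y) := by module
      rw [he, hφ.smul_nn (by linarith), hxy, hρ]
      nlinarith [mul_pos hl0 hδpos]
    obtain ⟨y', h1, h2⟩ := ball_in_ball hφ hspos hρs hxmem
    have hxs : x ∈ plaquette φ Ω s := by
      rw [mem_plaquette (ne_of_gt hspos)]
      refine ⟨y', fun w hw => hcombo ?_, h1⟩
      show φ (w - ((1 - l) • y + l • x)) < ρ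
      calc φ (w - ((1 - l) • y + l • x))
          = φ ((w - y') + (y' - ((1 - l) • y + l • x))) := by rw [sub_add_sub_cancel]
        _ ≤ φ (w - y') + φ (y' - ((1 - l) • y + l • x)) := hφ.add_le _ _
        _ < s + (ρ - s) := add_lt_add_of_lt_of_le hw h2
        _ = ρ := by ring
    rw [← hEq] at hxs
    rw [(isOpen_plaquette hφ hΩopen t).frontier_eq] at hxf
    exact hxf.2 hxs

end AuxStrict
section AuxParts

open Topology

variable {φ : (Fin 2 → ℝ) → ℝ} {Ω : Set (Fin 2 → ℝ)}

lemma part_one (hφ : IsNorm φ) (hΩopen : IsOpen Ω) (hb : Bornology.IsBounded Ω)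
    (hconv : Convex ℝ Ω) :
    ∀ r : ℝ, 0 ≤ r → r ≤ maxRollRadius φ Ω → volume (plaquette φ Ω r) = volume Ω := by
  intro r hr0 hrr₀
  rcases eq_or_lt_of_le hr0 with h0 | hrpos
  · rw [← h0, plaquette_zero]
  have hSne : {r' : ℝ | 0 < r' ∧ rWCond φ Ω r'}.Nonempty := by
    by_contra h
    rw [not_nonempty_iff_eq_empty] at h
    rw [maxRollRadius, h, Real.sSup_empty] at hrr₀
    linarith
  have hfull : ∀ u : ℝ, 0 < u → u < maxRollRadius φ Ω → plaquette φ Ω u = Ω := by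
    intro u hu hult
    obtain ⟨r', hr', hur'⟩ := exists_lt_of_lt_csSup hSne hult
    exact rW_full hφ hΩopen hb hconv hu (rWCond_mono hφ hu hur'.le hr'.2)
  rcases lt_or_eq_of_le hrr₀ with hrlt | hreq
  · rw [hfull r hrpos hrlt]
  · have hle1 : volume (plaquette φ Ω r) ≤ volume Ω := measure_mono (plaquette_subset φ Ω r)
    have hge : (volume Ω).toReal ≤ (volume (plaquette φ Ω r)).toReal := by
      apply _root_.le_of_forall_pos_le_add
      intro ε hε
      obtain ⟨u, hu0, hur, hule⟩ := plaquette_left_approx hφ hΩopen hb hconv hrpos hε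
      have hfull' : plaquette φ Ω u = Ω := hfull u hu0 (hreq ▸ hur)
      calc (volume Ω).toReal = (volume (plaquette φ Ω u)).toReal := by rw [hfull']
        _ ≤ (volume (plaquette φ Ω r)).toReal + ε := hule
    have hge' : volume Ω ≤ volume (plaquette φ Ω r) :=
      (ENNReal.toReal_le_toReal hb.measure_lt_top.ne (volume_plaquette_ne_top hb r)).1 hge
    exact le_antisymm hle1 hge'

lemma part_two (hφ : IsNorm φ) (hb : Bornology.IsBounded Ω) :
    ∀ r : ℝ, maxInradius φ Ω < r → volume (plaquette φ Ω r) = 0 := by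
  intro r hr
  have hr0 : 0 < r := lt_of_le_of_lt (maxInradius_nonneg φ Ω) hr
  have hempty : plaquette φ Ω r = ∅ := by
    rw [eq_empty_iff_forall_notMem]
    intro z hz
    rw [mem_plaquette (ne_of_gt hr0)] at hz
    obtain ⟨y, hy, _⟩ := hz
    have : r ≤ maxInradius φ Ω := le_csSup (bddAbove_inradiusSet hφ hb) ⟨hr0, y, hy⟩
    linarith
  rw [hempty]
  exact measure_empty

lemma plaquette_empty (hφ : IsNorm φ) (r : ℝ) : plaquette φ (∅ : Set (Fin 2 → ℝ)) r = ∅ := by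
  rcases eq_or_ne r 0 with rfl | hr
  · exact plaquette_zero φ ∅
  · rw [eq_empty_iff_forall_notMem]
    intro z hz
    rw [mem_plaquette hr] at hz
    obtain ⟨y, hy, hzy⟩ := hz
    exact hy hzy

lemma part_three (hφ : IsNorm φ) (hΩopen : IsOpen Ω) (hb : Bornology.IsBounded Ω)
    (hconv : Convex ℝ Ω) (hne : Ω.Nonempty) :
    ContinuousOn (fun r : ℝ => (volume (plaquette φ Ω r)).toReal)
      (Icc (maxRollRadius φ Ω) (maxInradius φ Ω)) := by
  obtain ⟨x₀, hx₀⟩ := maxInradius_attained hφ hΩopen hb hne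
  set r₀ : ℝ := maxRollRadius φ Ω with hr₀def
  set R : ℝ := maxInradius φ Ω with hRdef
  set v : ℝ → ℝ := fun r => (volume (plaquette φ Ω r)).toReal with hv
  have hr₀nn : 0 ≤ r₀ := maxRollRadius_nonneg φ Ω
  have hRpos : 0 < R := maxInradius_pos hφ hΩopen hb hne
  set B : ℝ := (volume Ω).toReal with hB
  have hBnn : 0 ≤ B := ENNReal.toReal_nonneg
  have hvnn : ∀ r : ℝ, 0 ≤ v r := fun r => ENNReal.toReal_nonneg
  have hvB : ∀ r : ℝ, v r ≤ B := fun r =>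
    ENNReal.toReal_mono hb.measure_lt_top.ne (measure_mono (plaquette_subset φ Ω r))
  have hmono : ∀ p q : ℝ, 0 ≤ p → p ≤ q → v q ≤ v p := fun p q hp hpq =>
    ENNReal.toReal_mono (volume_plaquette_ne_top hb p)
      (measure_mono (plaquette_antitone hφ hp hpq))
  have hF2 : ∀ p q : ℝ, 0 ≤ p → p ≤ q → q ≤ R → p < R →
      ((R - q) / (R - p)) ^ 2 * v p ≤ v q := by
    intro p q h1 h2 h3 h4
    have h := plaquette_homothety hφ hconv hx₀ h1 h2 h3 h4
    have h' := ENNReal.toReal_mono (volume_plaquette_ne_top hb q) h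
    rwa [ENNReal.toReal_mul, ENNReal.toReal_ofReal (by positivity)] at h'
  have hbound : ∀ p q : ℝ, 0 ≤ p → p ≤ q → q ≤ R → p < R →
      v p - v q ≤ B * (2 * (q - p) / (R - p)) := by
    intro p q h1 h2 h3 h4
    have hRp : 0 < R - p := by linarith
    set β : ℝ := (R - q) / (R - p) with hβ
    have hβ0 : 0 ≤ β := div_nonneg (by linarith) hRp.le
    have hβ1 : β ≤ 1 := by rw [hβ, div_le_one hRp]; linarith
    have h5 := hF2 p q h1 h2 h3 h4
    have h6 : v p - v q ≤ v p * (1 - β ^ 2) := by nlinarith [h5]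
    have h7 : 1 - β ^ 2 ≤ 2 * (1 - β) := by nlinarith [sq_nonneg (1 - β)]
    have h8 : 1 - β = (q - p) / (R - p) := by
      rw [hβ]
      field_simp
      ring
    have hβsq : 0 ≤ 1 - β ^ 2 := by nlinarith
    have h9a : v p * (1 - β ^ 2) ≤ B * (1 - β ^ 2) :=
      mul_le_mul_of_nonneg_right (hvB p) hβsq
    have h9b : B * (1 - β ^ 2) ≤ B * (2 * (1 - β)) := mul_le_mul_of_nonneg_left h7 hBnn
    calc v p - v q ≤ v p * (1 - β ^ 2) := h6
      _ ≤ B * (1 - β ^ 2) := h9a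
      _ ≤ B * (2 * (1 - β)) := h9b
      _ = B * (2 * (q - p) / (R - p)) := by rw [h8]; ring
  intro a ha
  rw [Metric.continuousWithinAt_iff]
  intro ε hε
  have ha0 : 0 ≤ a := le_trans hr₀nn ha.1
  rcases lt_or_eq_of_le ha.2 with haR | haR
  · -- a < R : two-sided bound
    have hRa : 0 < R - a := by linarith
    set δ : ℝ := min ((R - a) / 2) (ε * (R - a) / (8 * B + 8)) with hδ
    have hδpos : 0 < δ := lt_min (by linarith) (by positivity)
    refine ⟨δ, hδpos, fun y hy hyd => ?_⟩
    have hy0 : 0 ≤ y := le_trans hr₀nn hy.1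
    rw [Real.dist_eq] at hyd ⊢
    have hdle : |y - a| ≤ ε * (R - a) / (8 * B + 8) := le_trans hyd.le (min_le_right _ _)
    have hdle2 : |y - a| ≤ (R - a) / 2 := le_trans hyd.le (min_le_left _ _)
    have hkey : |v y - v a| ≤ B * (2 * |y - a| / ((R - a) / 2)) := by
      rcases le_total y a with hya | hya
      · have hyR : y < R := lt_of_le_of_lt hya haR
        have h10 := hbound y a hy0 hya haR.le hyR
        have hmono' : v a ≤ v y := hmono y a hy0 hya
        have habs : |v y - v a| = v y - v a := abs_of_nonneg (by linarith)
        have habs2 : |y - a| = a - y := by rw [abs_sub_comm]; exact abs_of_nonneg (by linarith)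
        have hden : (R - a) / 2 ≤ R - y := by linarith
        have hnum : 0 ≤ 2 * (a - y) := by linarith
        have h11 : 2 * (a - y) / (R - y) ≤ 2 * (a - y) / ((R - a) / 2) :=
          div_le_div_of_nonneg_left hnum (by linarith) hden
        rw [habs, habs2]
        calc v y - v a ≤ B * (2 * (a - y) / (R - y)) := h10
          _ ≤ B * (2 * (a - y) / ((R - a) / 2)) := mul_le_mul_of_nonneg_left h11 hBnn
      · have h10 := hbound a y ha0 hya hy.2 haR
        have hmono' : v y ≤ v a := hmono a y ha0 hya
        have habs : |v y - v a| = v a - v y := by rw [abs_sub_comm]; exact abs_of_nonneg (by linarith)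
        have habs2 : |y - a| = y - a := abs_of_nonneg (by linarith)
        have hden : (R - a) / 2 ≤ R - a := by linarith
        have hnum : 0 ≤ 2 * (y - a) := by linarith
        have h11 : 2 * (y - a) / (R - a) ≤ 2 * (y - a) / ((R - a) / 2) :=
          div_le_div_of_nonneg_left hnum (by linarith) hden
        rw [habs, habs2]
        calc v a - v y ≤ B * (2 * (y - a) / (R - a)) := h10
          _ ≤ B * (2 * (y - a) / ((R - a) / 2)) := mul_le_mul_of_nonneg_left h11 hBnn
    have hc1 : B * (2 * |y - a| / ((R - a) / 2)) = 4 * B * |y - a| / (R - a) := by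
      field_simp
      ring
    have hc2 : 4 * B * |y - a| ≤ 4 * B * (ε * (R - a) / (8 * B + 8)) :=
      mul_le_mul_of_nonneg_left hdle (by linarith)
    have hval : 4 * B * (ε * (R - a) / (8 * B + 8)) / (R - a) = ε * (4 * B / (8 * B + 8)) := by
      field_simp
    have hfrac : 4 * B / (8 * B + 8) < 1 := by
      rw [div_lt_one (by linarith)]
      linarith
    have hc3 : ε * (4 * B / (8 * B + 8)) < ε := by
      have hnn : 0 ≤ 4 * B / (8 * B + 8) :=
        div_nonneg (by linarith) (by linarith)
      nlinarith
    have hfinal : |v y - v a| ≤ 4 * B * |y - a| / (R - a) := hkey.trans_eq hc1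
    have hstep : 4 * B * |y - a| / (R - a) ≤ ε * (4 * B / (8 * B + 8)) := by
      rw [← hval]
      exact (div_le_div_iff_of_pos_right hRa).2 hc2
    calc |v y - v a| ≤ 4 * B * |y - a| / (R - a) := hfinal
      _ ≤ ε * (4 * B / (8 * B + 8)) := hstep
      _ < ε := hc3
  · -- a = R : one-sided (left) continuity
    obtain ⟨u, hu0, huR, hule⟩ := plaquette_left_approx hφ hΩopen hb hconv
      (show (0:ℝ) < a by rw [haR]; exact hRpos) (half_pos hε)
    refine ⟨a - u, by linarith, fun y hy hyd => ?_⟩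
    rw [Real.dist_eq] at hyd ⊢
    have hyu : u ≤ y := by
      have h := (abs_lt.1 hyd).1
      linarith
    have hy2 : y ≤ a := by rw [haR]; exact hy.2
    have h1 : v y ≤ v u := hmono u y hu0.le hyu
    have h2 : v a ≤ v y := hmono y a (le_trans hu0.le hyu) hy2
    have h3 : v u ≤ v a + ε / 2 := hule
    rw [abs_lt]
    constructor
    · linarith
    · linarith

end AuxParts
/-- For a bounded convex open set `Ω ⊆ ℝ²`, the function
`v(r) = |Ω^r|` equals `|Ω|` for `0 ≤ r ≤ r_Ω`, vanishes for `r > R_Ω`, and is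
continuous and monotone decreasing on `[r_Ω, R_Ω]`; consequently, for every
`m ∈ [|Ω^{R_Ω}|, |Ω|]` there is a unique `r_m ∈ [r_Ω, R_Ω]` with `|Ω^{r_m}| = m`. -/
theorem plaquette_volume_function (φ : (Fin 2 → ℝ) → ℝ) (hφ : IsNorm φ)
    (Ω : Set (Fin 2 → ℝ)) (hΩopen : IsOpen Ω) (hΩbdd : Bornology.IsBounded Ω)
    (hΩconv : Convex ℝ Ω) :
    (∀ r : ℝ, 0 ≤ r → r ≤ maxRollRadius φ Ω →
      volume (plaquette φ Ω r) = volume Ω) ∧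
    (∀ r : ℝ, maxInradius φ Ω < r → volume (plaquette φ Ω r) = 0) ∧
    ContinuousOn (fun r : ℝ => (volume (plaquette φ Ω r)).toReal)
      (Icc (maxRollRadius φ Ω) (maxInradius φ Ω)) ∧
    AntitoneOn (fun r : ℝ => (volume (plaquette φ Ω r)).toReal)
      (Icc (maxRollRadius φ Ω) (maxInradius φ Ω)) ∧
    (∀ m : ℝ, (volume (plaquette φ Ω (maxInradius φ Ω))).toReal ≤ m →
      m ≤ (volume Ω).toReal →
      ∃! r : ℝ, r ∈ Icc (maxRollRadius φ Ω) (maxInradius φ Ω) ∧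
        (volume (plaquette φ Ω r)).toReal = m) := by
  rcases Ω.eq_empty_or_nonempty with rfl | hne
  · -- the empty case
    have hplaq : ∀ r : ℝ, plaquette φ (∅ : Set (Fin 2 → ℝ)) r = ∅ := plaquette_empty hφ
    have hR : maxInradius φ (∅ : Set (Fin 2 → ℝ)) = 0 := by
      have hset : {R : ℝ | 0 < R ∧ ∃ x, wulffBall φ x R ⊆ (∅ : Set (Fin 2 → ℝ))} = ∅ := by
        rw [eq_empty_iff_forall_notMem]
        rintro R ⟨hRpos, x, hx⟩
        exact hx (self_mem_wulffBall hφ hRpos)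
      rw [maxInradius, hset, Real.sSup_empty]
    have hr₀ : maxRollRadius φ (∅ : Set (Fin 2 → ℝ)) = 0 := by
      have hset : {r : ℝ | 0 < r ∧ rWCond φ (∅ : Set (Fin 2 → ℝ)) r} = Ioi 0 := by
        ext r
        simp only [mem_setOf_eq, mem_Ioi, and_iff_left_iff_imp]
        intro _ x hx
        rw [frontier_empty] at hx
        exact absurd hx (notMem_empty x)
      rw [maxRollRadius, hset, Real.sSup_of_not_bddAbove (not_bddAbove_Ioi (0:ℝ))]
    refine ⟨?_, ?_, ?_, ?_, ?_⟩
    · intro r _ _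
      rw [hplaq r]
    · intro r _
      rw [hplaq r]
      exact measure_empty
    · have hfun : (fun r : ℝ => (volume (plaquette φ (∅ : Set (Fin 2 → ℝ)) r)).toReal)
          = fun _ => (0 : ℝ) := funext fun r => by rw [hplaq r]; simp
      rw [hfun]
      exact continuousOn_const
    · intro p _ q _ _
      simp only [hplaq]
      exact le_rfl
    · intro m hm1 hm2
      rw [hplaq _] at hm1
      simp only [measure_empty, ENNReal.toReal_zero] at hm1 hm2
      have hm0 : m = 0 := le_antisymm hm2 hm1
      rw [hr₀, hR]
      refine ⟨0, ⟨⟨le_rfl, le_rfl⟩, ?_⟩, ?_⟩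
      · rw [hplaq 0, hm0]
        simp
      · rintro r' ⟨⟨h1, h2⟩, _⟩
        exact le_antisymm h2 h1
  · -- the nonempty case
    have hr₀nn := maxRollRadius_nonneg φ Ω
    have hr₀R := maxRollRadius_le hφ hΩopen hΩbdd hne
    have hone := part_one hφ hΩopen hΩbdd hΩconv
    have hcont := part_three hφ hΩopen hΩbdd hΩconv hne
    refine ⟨hone, part_two hφ hΩbdd, hcont, ?_, ?_⟩
    · intro p hp q hq hpq
      exact ENNReal.toReal_mono (volume_plaquette_ne_top hΩbdd p)
        (measure_mono (plaquette_antitone hφ (le_trans hr₀nn hp.1) hpq))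
    · intro m hm1 hm2
      have hvr₀ : (volume (plaquette φ Ω (maxRollRadius φ Ω))).toReal = (volume Ω).toReal := by
        rw [hone _ hr₀nn le_rfl]
      have himage := intermediate_value_Icc' hr₀R hcont
      have hmem : m ∈ Icc ((fun r : ℝ => (volume (plaquette φ Ω r)).toReal) (maxInradius φ Ω))
          ((fun r : ℝ => (volume (plaquette φ Ω r)).toReal) (maxRollRadius φ Ω)) := by
        constructor
        · exact hm1
        · exact le_trans hm2 (le_of_eq hvr₀.symm)
      obtain ⟨r, hrIcc, hrv⟩ := himage hmem
      have hstrict : StrictAntiOn (fun r : ℝ => (volume (plaquette φ Ω r)).toReal)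
          (Icc (maxRollRadius φ Ω) (maxInradius φ Ω)) := by
        intro p hp q hq hpq
        exact (ENNReal.toReal_lt_toReal (volume_plaquette_ne_top hΩbdd q)
          (volume_plaquette_ne_top hΩbdd p)).2
          (plaquette_strict hφ hΩopen hΩbdd hΩconv hne hp.1 hpq hq.2)
      refine ⟨r, ⟨hrIcc, hrv⟩, ?_⟩
      rintro r' ⟨hr'Icc, hr'v⟩
      exact hstrict.injOn hr'Icc hrIcc (hr'v.trans hrv.symm)

end
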